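/- Let F be a finite field of order q^2 and R a finite subset of the nonzero elements of the algebraic closure of F that is closed under the map π(x) = x^{−q}. Then the sum S = Σ over unordered pairs {u,v} ⊆ R with u ≠ v of uv/(u−v)^2 lies in the subfield of order q. -/

import Mathlib

open scoped Classical in
/-- If `R` is a finite subset of the nonzero algebraic closure of `F` (of order `q^2`)
closed under `π(x) = x^{-q}`, then `S = Σ_{{u,v}⊆R, u≠v} uv/(u-v)^2` lies in the subfield
of order `q`, i.e. `S^q = S`. -/
theorem stmt7 (q : ℕ) (hq : IsPrimePow q) (F : Type) [Field F] [Fintype F]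
    (hF : Fintype.card F = q ^ 2) (R : Finset (AlgebraicClosure F))
    (h0 : (0 : AlgebraicClosure F) ∉ R)
    (hclosed : ∀ u ∈ R, (u ^ q)⁻¹ ∈ R) :
    (∑ e ∈ R.sym2.filter (fun e => ¬ e.IsDiag),
        Sym2.lift ⟨fun u v => u * v / (u - v) ^ 2, by
          intro a b
          show a * b / (a - b) ^ 2 = b * a / (b - a) ^ 2
          rw [mul_comm a b, show (a - b) ^ 2 = (b - a) ^ 2 from by ring]⟩ e) ^ q
      = ∑ e ∈ R.sym2.filter (fun e => ¬ e.IsDiag),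
          Sym2.lift ⟨fun u v => u * v / (u - v) ^ 2, by
            intro a b
            show a * b / (a - b) ^ 2 = b * a / (b - a) ^ 2
            rw [mul_comm a b, show (a - b) ^ 2 = (b - a) ^ 2 from by ring]⟩ e := by
  obtain ⟨p, k, hp, hk, rfl⟩ := hq
  have hp' : p.Prime := hp.nat_prime
  haveI : Fact p.Prime := ⟨hp'⟩
  have hcharF : CharP F p := by
    obtain ⟨n, hpn, hcard⟩ := FiniteField.card F (ringChar F)
    have h1 : (ringChar F) ^ (n : ℕ) = p ^ (2 * k) := by
      rw [← hcard, hF]; ring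
    have hdvd : p ∣ ringChar F ^ (n : ℕ) := h1 ▸ dvd_pow_self p (by positivity)
    have h2 : p = ringChar F :=
      (Nat.prime_dvd_prime_iff_eq hp' hpn).mp (hp'.dvd_of_dvd_pow hdvd)
    rw [h2]; exact ringChar.charP F
  haveI : CharP (AlgebraicClosure F) p :=
    charP_of_injective_algebraMap (algebraMap F (AlgebraicClosure F)).injective p
  haveI : ExpChar (AlgebraicClosure F) p := ExpChar.prime hp'
  set φ : AlgebraicClosure F →+* AlgebraicClosure F := iterateFrobenius (AlgebraicClosure F) p k
    with hφ
  have hφx : ∀ x : AlgebraicClosure F, φ x = x ^ p ^ k := fun x => iterateFrobenius_def p k x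
  have hφinj : Function.Injective φ := φ.injective
  set f : Sym2 (AlgebraicClosure F) → AlgebraicClosure F :=
    Sym2.lift ⟨fun u v => u * v / (u - v) ^ 2, by
      intro a b
      show a * b / (a - b) ^ 2 = b * a / (b - a) ^ 2
      rw [mul_comm a b, show (a - b) ^ 2 = (b - a) ^ 2 from by ring]⟩ with hf
  set π : AlgebraicClosure F → AlgebraicClosure F := fun u => (u ^ p ^ k)⁻¹ with hπ
  have hπR : ∀ u ∈ R, π u ∈ R := hclosed
  have hπinj : ∀ u ∈ R, ∀ v ∈ R, π u = π v → u = v := by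
    intro u hu v hv h
    have huv : u ^ p ^ k = v ^ p ^ k := by
      have := congrArg (·⁻¹) h
      simpa [hπ, inv_inv] using this
    exact hφinj (by rw [hφx, hφx, huv])
  set s := R.sym2.filter (fun e => ¬ e.IsDiag) with hs
  set i : Sym2 (AlgebraicClosure F) → Sym2 (AlgebraicClosure F) := Sym2.map π with hi
  have hmem : ∀ e ∈ s, i e ∈ s := by
    intro e he
    induction e using Sym2.ind with
    | _ u v =>
      simp only [hs, Finset.mem_filter, Finset.mk_mem_sym2_iff, Sym2.mk_isDiag_iff] at he
      obtain ⟨⟨hu, hv⟩, huv⟩ := he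
      simp only [hi, Sym2.map_pair_eq, hs, Finset.mem_filter, Finset.mk_mem_sym2_iff,
        Sym2.mk_isDiag_iff]
      exact ⟨⟨hπR u hu, hπR v hv⟩, fun h => huv (hπinj u hu v hv h)⟩
  have hinj : ∀ e₁ ∈ s, ∀ e₂ ∈ s, i e₁ = i e₂ → e₁ = e₂ := by
    intro e₁ he₁ e₂ he₂ h
    induction e₁ using Sym2.ind with
    | _ u v =>
      induction e₂ using Sym2.ind with
      | _ a b =>
        simp only [hs, Finset.mem_filter, Finset.mk_mem_sym2_iff] at he₁ he₂
        obtain ⟨⟨hu, hv⟩, _⟩ := he₁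
        obtain ⟨⟨ha, hb⟩, _⟩ := he₂
        simp only [hi, Sym2.map_pair_eq, Sym2.eq_iff] at h
        rcases h with ⟨h1, h2⟩ | ⟨h1, h2⟩
        · rw [Sym2.eq_iff]
          exact Or.inl ⟨hπinj u hu a ha h1, hπinj v hv b hb h2⟩
        · rw [Sym2.eq_iff]
          exact Or.inr ⟨hπinj u hu b hb h1, hπinj v hv a ha h2⟩
  have key : ∀ e ∈ s, φ (f e) = f (i e) := by
    intro e he
    induction e using Sym2.ind with
    | _ u v =>
      simp only [hs, Finset.mem_filter, Finset.mk_mem_sym2_iff, Sym2.mk_isDiag_iff] at he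
      obtain ⟨⟨hu, hv⟩, huv⟩ := he
      have hu0 : u ≠ 0 := fun h' => h0 (h' ▸ hu)
      have hv0 : v ≠ 0 := fun h' => h0 (h' ▸ hv)
      have huq : u ^ p ^ k ≠ 0 := pow_ne_zero _ hu0
      have hvq : v ^ p ^ k ≠ 0 := pow_ne_zero _ hv0
      have huvq : u ^ p ^ k ≠ v ^ p ^ k := fun h => huv (hφinj (by rw [hφx, hφx, h]))
      have step1 : φ (f s(u, v)) = (u ^ p ^ k) * (v ^ p ^ k) / (u ^ p ^ k - v ^ p ^ k) ^ 2 := by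
        rw [hf, Sym2.lift_mk, map_div₀, map_mul, map_pow, map_sub]
        simp only [hφx]
      rw [step1, hi, Sym2.map_pair_eq, hf, Sym2.lift_mk]
      show u ^ p ^ k * v ^ p ^ k / (u ^ p ^ k - v ^ p ^ k) ^ 2
        = (u ^ p ^ k)⁻¹ * (v ^ p ^ k)⁻¹ / ((u ^ p ^ k)⁻¹ - (v ^ p ^ k)⁻¹) ^ 2
      rw [div_eq_div_iff (pow_ne_zero 2 (sub_ne_zero.mpr huvq)) (pow_ne_zero 2
        (sub_ne_zero.mpr (fun h => huvq (inv_injective h))))]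
      field_simp
      ring
  have hsurj : ∀ b ∈ s, ∃ a, ∃ (ha : a ∈ s), (fun e (_ : e ∈ s) => i e) a ha = b := by
    intro b hb
    obtain ⟨a, ha, hab⟩ := Finset.surj_on_of_inj_on_of_card_le (fun e _ => i e)
      (fun e he => hmem e he) (fun a₁ a₂ h₁ h₂ => hinj a₁ h₁ a₂ h₂) le_rfl b hb
    exact ⟨a, ha, hab.symm⟩
  calc (∑ e ∈ s, f e) ^ p ^ k = φ (∑ e ∈ s, f e) := (hφx _).symm
    _ = ∑ e ∈ s, φ (f e) := map_sum φ _ _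
    _ = ∑ e ∈ s, f e := by
        refine (Finset.sum_congr rfl key).trans ?_
        exact Finset.sum_bij (f := fun e => f (i e)) (g := f)
          (fun e (_ : e ∈ s) => i e) hmem hinj hsurj (fun e he => rfl)
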